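/- For a connected finite undirected graph G that is not complete, the algebraic connectivity (second smallest eigenvalue of the Laplacian) is at most the vertex connectivity: λ₂(L) ≤ κ(G). -/

import Mathlib

/-- The vertex connectivity of `G`: the least size of a vertex set whose removal
disconnects the graph or leaves fewer than 2 vertices. -/
noncomputable def vConn {V : Type*} (G : SimpleGraph V) : ℕ :=
  sInf {k | ∃ S : Set V, S.ncard = k ∧ (¬ (G.induce Sᶜ).Connected ∨ Sᶜ.ncard ≤ 1)}

/-- The second smallest eigenvalue (with multiplicity) of the Laplacian matrix of `G`:
the algebraic connectivity. -/
noncomputable def lambda2 {V : Type*} [Fintype V] [DecidableEq V] (G : SimpleGraph V)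
    [DecidableRel G.Adj] : ℝ :=
  if h : 1 < Fintype.card V then
    let f : Fin (Fintype.card V) → ℝ := fun i =>
      (SimpleGraph.posSemidef_lapMatrix ℝ G).1.eigenvalues ((Fintype.equivFin V).symm i)
    (f ∘ Tuple.sort f) ⟨1, h⟩
  else 0

open Finset Matrix SimpleGraph in
lemma lambda2_mul_le {V : Type*} [Fintype V] [DecidableEq V]
    (G : SimpleGraph V) [DecidableRel G.Adj] (hconn : G.Connected)
    (x : V → ℝ) (hsum : ∑ v, x v = 0) :
    lambda2 G * (x ⬝ᵥ x) ≤ x ⬝ᵥ (G.lapMatrix ℝ *ᵥ x) := by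
  classical
  by_cases h : 1 < Fintype.card V
  case neg =>
    rw [lambda2, dif_neg h, zero_mul]
    simpa using (G.posSemidef_lapMatrix ℝ).dotProduct_mulVec_nonneg x
  have hn : Nonempty V := Fintype.card_pos_iff.mp (by omega)
  set L := G.lapMatrix ℝ with hL
  set hH := (SimpleGraph.posSemidef_lapMatrix ℝ G).1 with hHdef
  set e := Fintype.equivFin V with he
  set f : Fin (Fintype.card V) → ℝ := fun i => hH.eigenvalues (e.symm i) with hf
  set σ := Tuple.sort f with hσ
  have hmono : Monotone (f ∘ σ) := Tuple.monotone_sort f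
  have hlam : lambda2 G = (f ∘ σ) ⟨1, h⟩ := by
    rw [lambda2, dif_pos h]
  set lam : ℝ := (f ∘ σ) ⟨1, h⟩ with hlamdef
  set b := hH.eigenvectorBasis with hb
  set X : EuclideanSpace ℝ V := (WithLp.equiv 2 (V → ℝ)).symm x with hX
  set Y : EuclideanSpace ℝ V := (WithLp.equiv 2 (V → ℝ)).symm (L *ᵥ x) with hY
  set c : V → ℝ := fun v => inner ℝ (b v) X with hc
  -- basic inner product facts
  have hinner : ∀ (u w : EuclideanSpace ℝ V),
      (inner ℝ u w : ℝ) = (WithLp.equiv 2 (V → ℝ)) u ⬝ᵥ (WithLp.equiv 2 (V → ℝ)) w := by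
    intro u w
    rw [PiLp.inner_apply]
    simp [dotProduct, mul_comm]
  have hXval : (WithLp.equiv 2 (V → ℝ)) X = x := rfl
  have hYval : (WithLp.equiv 2 (V → ℝ)) Y = L *ᵥ x := rfl
  have hXX : x ⬝ᵥ x = ∑ v, (c v)^2 := by
    calc x ⬝ᵥ x = (inner ℝ X X : ℝ) := by rw [hinner, hXval]
    _ = ∑ v, (inner ℝ X (b v) : ℝ) * inner ℝ (b v) X := (b.sum_inner_mul_inner X X).symm
    _ = ∑ v, (c v)^2 := by
        refine Finset.sum_congr rfl fun v _ => ?_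
        rw [real_inner_comm (b v) X]; rw [hc]; ring
  have hbX : ∀ v, (inner ℝ (b v) X : ℝ) = (WithLp.equiv 2 (V → ℝ)) (b v) ⬝ᵥ x := by
    intro v; rw [hinner, hXval]
  have hbY : ∀ v, (inner ℝ (b v) Y : ℝ) = hH.eigenvalues v * c v := by
    intro v
    have hsymm : (G.lapMatrix ℝ)ᵀ = G.lapMatrix ℝ := (G.isSymm_lapMatrix (R := ℝ)).eq
    rw [hinner, hYval, hL, Matrix.dotProduct_mulVec]
    conv_lhs => rw [← hsymm, Matrix.vecMul_transpose]
    rw [hb, WithLp.equiv_apply, hH.mulVec_eigenvectorBasis, smul_dotProduct, smul_eq_mul]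
    congr 1
    exact (hbX v).symm
  have hXY : x ⬝ᵥ (L *ᵥ x) = ∑ v, hH.eigenvalues v * (c v)^2 := by
    calc x ⬝ᵥ (L *ᵥ x) = (inner ℝ X Y : ℝ) := by rw [hinner, hXval, hYval]
    _ = ∑ v, (inner ℝ X (b v) : ℝ) * inner ℝ (b v) Y := (b.sum_inner_mul_inner X Y).symm
    _ = ∑ v, hH.eigenvalues v * (c v)^2 := by
        refine Finset.sum_congr rfl fun v _ => ?_
        rw [real_inner_comm (b v) X, hbY v, hc]
        ring
  set v₀ : V := e.symm (σ 0) with hv₀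
  have hnonneg : ∀ v, 0 ≤ hH.eigenvalues v := fun v =>
    (SimpleGraph.posSemidef_lapMatrix ℝ G).eigenvalues_nonneg v
  have hdet : (G.lapMatrix ℝ).det = 0 := by
    rw [← Matrix.exists_mulVec_eq_zero_iff]
    refine ⟨fun _ => 1, ?_, G.lapMatrix_mulVec_const_eq_zero⟩
    intro h0
    have := congrFun h0 (Classical.arbitrary V)
    simp at this
  have hzero : ∃ w, hH.eigenvalues w = 0 := by
    have hdp := hH.det_eq_prod_eigenvalues
    rw [hdet] at hdp
    obtain ⟨w, _, hw⟩ := Finset.prod_eq_zero_iff.mp hdp.symm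
    exact ⟨w, by exact_mod_cast hw⟩
  have hmin : hH.eigenvalues v₀ = 0 := by
    obtain ⟨w, hw⟩ := hzero
    have h2 : (f ∘ σ) 0 ≤ (f ∘ σ) (σ.symm (e w)) := hmono (Fin.le_def.mpr (Nat.zero_le _))
    have h3 : (f ∘ σ) (σ.symm (e w)) = hH.eigenvalues w := by
      simp [hf, Equiv.apply_symm_apply, Equiv.symm_apply_apply]
    have h4 : (f ∘ σ) 0 = hH.eigenvalues v₀ := rfl
    refine le_antisymm ?_ (hnonneg v₀)
    rw [← h4]
    calc (f ∘ σ) 0 ≤ hH.eigenvalues w := h3 ▸ h2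
    _ = 0 := hw
  have hker : G.lapMatrix ℝ *ᵥ (WithLp.equiv 2 (V → ℝ)) (b v₀) = 0 := by
    rw [hb, WithLp.equiv_apply, hH.mulVec_eigenvectorBasis]
    rw [hmin, zero_smul]
  have hconst : ∀ i j : V, ((WithLp.equiv 2 (V → ℝ)) (b v₀)) i =
      ((WithLp.equiv 2 (V → ℝ)) (b v₀)) j := by
    have hrz := G.lapMatrix_mulVec_eq_zero_iff_forall_reachable.mp hker
    intro i j
    exact hrz i j (hconn.preconnected i j)
  have hc0 : c v₀ = 0 := by
    obtain ⟨i₀⟩ := hn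
    have h1 : c v₀ = ∑ i, ((WithLp.equiv 2 (V → ℝ)) (b v₀)) i * x i := by
      rw [hc]
      exact hbX v₀
    rw [h1]
    calc ∑ i, ((WithLp.equiv 2 (V → ℝ)) (b v₀)) i * x i
        = ∑ i, ((WithLp.equiv 2 (V → ℝ)) (b v₀)) i₀ * x i :=
          Finset.sum_congr rfl fun i _ => by rw [hconst i i₀]
    _ = ((WithLp.equiv 2 (V → ℝ)) (b v₀)) i₀ * ∑ i, x i := by rw [Finset.mul_sum]
    _ = 0 := by rw [hsum, mul_zero]
  have hlamle : ∀ v, v ≠ v₀ → lam ≤ hH.eigenvalues v := by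
    intro v hv
    have hne : σ.symm (e v) ≠ 0 := by
      intro h0
      apply hv
      rw [hv₀, ← h0]
      simp
    have hle : (⟨1, h⟩ : Fin (Fintype.card V)) ≤ σ.symm (e v) := by
      rw [Fin.le_def]
      have hvne : (σ.symm (e v)).val ≠ 0 := fun h0 => hne (Fin.ext (by rw [h0]; simp))
      show 1 ≤ (σ.symm (e v)).val
      omega
    have h2 := hmono hle
    have h3 : (f ∘ σ) (σ.symm (e v)) = hH.eigenvalues v := by
      simp [hf, Equiv.apply_symm_apply, Equiv.symm_apply_apply]
    rw [hlamdef]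
    rw [← h3]
    exact h2
  rw [hlam, hXX, hXY, Finset.mul_sum]
  refine Finset.sum_le_sum fun v _ => ?_
  by_cases hveq : v = v₀
  · subst hveq; rw [hc0]; simp
  · exact mul_le_mul_of_nonneg_right (hlamle v hveq) (sq_nonneg _)

open Finset Matrix SimpleGraph in
lemma lambda2_le_card_compl {V : Type*} [Fintype V] [DecidableEq V]
    (G : SimpleGraph V) [DecidableRel G.Adj] (hconn : G.Connected)
    (A B : Finset V) (hA : A.Nonempty) (hB : B.Nonempty) (hd : Disjoint A B)
    (hedge : ∀ i ∈ A, ∀ j ∈ B, ¬ G.Adj i j) :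
    lambda2 G ≤ ((Finset.univ \ (A ∪ B)).card : ℝ) := by
  classical
  set a : ℝ := (A.card : ℝ) with ha
  set bb : ℝ := (B.card : ℝ) with hbb
  set s : ℝ := ((Finset.univ \ (A ∪ B)).card : ℝ) with hs
  set χA : V → ℝ := fun v => if v ∈ A then 1 else 0 with hχA
  set χB : V → ℝ := fun v => if v ∈ B then 1 else 0 with hχB
  set χS : V → ℝ := fun v => if v ∈ A ∪ B then 0 else 1 with hχS
  have hχA_nonneg : ∀ v, 0 ≤ χA v := fun v => by rw [hχA]; dsimp; split <;> norm_num
  have hχB_nonneg : ∀ v, 0 ≤ χB v := fun v => by rw [hχB]; dsimp; split <;> norm_num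
  have hχS_nonneg : ∀ v, 0 ≤ χS v := fun v => by rw [hχS]; dsimp; split <;> norm_num
  have hsumχA : ∑ v, χA v = a := by
    rw [hχA, ha]; simp [Finset.sum_ite_mem]
  have hsumχB : ∑ v, χB v = bb := by
    rw [hχB, hbb]; simp [Finset.sum_ite_mem]
  have hsumχS : ∑ v, χS v = s := by
    rw [hχS, hs]
    calc ∑ v, (if v ∈ A ∪ B then (0:ℝ) else 1)
        = ∑ v, (if v ∈ Finset.univ \ (A ∪ B) then (1:ℝ) else 0) :=
          Finset.sum_congr rfl fun v _ => by by_cases hv : v ∈ A ∪ B <;> simp [hv]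
    _ = ((Finset.univ \ (A ∪ B)).card : ℝ) := by
          simp only [Finset.sum_ite_mem, Finset.univ_inter, Finset.sum_const, nsmul_eq_mul,
            mul_one]
  set x : V → ℝ := fun v => bb * χA v - a * χB v with hx
  have hsumx : ∑ v, x v = 0 := by
    rw [hx]
    simp only [Finset.sum_sub_distrib, ← Finset.mul_sum, hsumχA, hsumχB]
    ring
  have hxsq : ∑ v, (x v)^2 = a * bb^2 + a^2 * bb := by
    have hpt : ∀ v, (x v)^2 = bb^2 * χA v + a^2 * χB v := by
      intro v
      rw [hx, hχA, hχB]
      by_cases hvA : v ∈ A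
      · have hvB : v ∉ B := fun hvB => (Finset.disjoint_left.mp hd hvA) hvB
        simp [hvA, hvB]
      · by_cases hvB : v ∈ B <;> simp [hvA, hvB]
    rw [Finset.sum_congr rfl fun v _ => hpt v]
    rw [Finset.sum_add_distrib, ← Finset.mul_sum, ← Finset.mul_sum, hsumχA, hsumχB]
    ring
  have hpt2 : ∀ i j, (if G.Adj i j then (x i - x j)^2 else 0) ≤
      bb^2 * (χA i * χS j + χS i * χA j) + a^2 * (χB i * χS j + χS i * χB j) := by
    intro i j
    have hRHS : 0 ≤ bb^2 * (χA i * χS j + χS i * χA j) + a^2 * (χB i * χS j + χS i * χB j) := by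
      have h1 := hχA_nonneg i; have h2 := hχA_nonneg j
      have h3 := hχB_nonneg i; have h4 := hχB_nonneg j
      have h5 := hχS_nonneg i; have h6 := hχS_nonneg j
      positivity
    by_cases hadj : G.Adj i j
    case neg => simpa [hadj] using hRHS
    rw [if_pos hadj]
    have hiAB : ¬ (i ∈ A ∧ j ∈ B) := fun ⟨hi, hj⟩ => hedge i hi j hj hadj
    have hjAB : ¬ (i ∈ B ∧ j ∈ A) := fun ⟨hi, hj⟩ => hedge j hj i hi hadj.symm
    rw [hx, hχA, hχB, hχS]
    by_cases hiA : i ∈ A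
    · have hiB : i ∉ B := Finset.disjoint_left.mp hd hiA
      by_cases hjA : j ∈ A
      · have hjB : j ∉ B := Finset.disjoint_left.mp hd hjA
        simp [Finset.mem_union, hiA, hiB, hjA, hjB]
      · by_cases hjB : j ∈ B
        · exact absurd hadj (hedge i hiA j hjB)
        · simp [Finset.mem_union, hiA, hiB, hjA, hjB]
    · by_cases hiB : i ∈ B
      · by_cases hjA : j ∈ A
        · exact absurd hadj.symm (hedge j hjA i hiB)
        · by_cases hjB : j ∈ B
          · simp [Finset.mem_union, hiA, hiB, hjA, hjB]
          · simp [Finset.mem_union, hiA, hiB, hjA, hjB]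
      · by_cases hjA : j ∈ A
        · have hjB : j ∉ B := Finset.disjoint_left.mp hd hjA
          simp [Finset.mem_union, hiA, hiB, hjA, hjB]
        · by_cases hjB : j ∈ B
          · simp [Finset.mem_union, hiA, hiB, hjA, hjB]
          · simp [Finset.mem_union, hiA, hiB, hjA, hjB]
  have hQ : x ⬝ᵥ (G.lapMatrix ℝ *ᵥ x) ≤ s * (a * bb^2 + a^2 * bb) := by
    rw [← Matrix.toLinearMap₂'_apply', G.lapMatrix_toLinearMap₂' (R := ℝ) x]
    have hsum_le : (∑ i, ∑ j, if G.Adj i j then (x i - x j)^2 else 0) ≤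
        ∑ i, ∑ j, (bb^2 * (χA i * χS j + χS i * χA j) + a^2 * (χB i * χS j + χS i * χB j)) :=
      Finset.sum_le_sum fun i _ => Finset.sum_le_sum fun j _ => hpt2 i j
    have hsum_eq : (∑ i, ∑ j,
        (bb^2 * (χA i * χS j + χS i * χA j) + a^2 * (χB i * χS j + χS i * χB j)))
        = 2 * (s * (a * bb^2 + a^2 * bb)) := by
      simp only [Finset.sum_add_distrib, ← Finset.mul_sum]
      simp only [← Finset.sum_mul]
      rw [hsumχA, hsumχB, hsumχS]
      ring
    linarith
  have hdot : x ⬝ᵥ x = a * bb^2 + a^2 * bb := by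
    rw [← hxsq]
    simp [dotProduct, pow_two]
  have ha1 : 1 ≤ a := by rw [ha]; exact_mod_cast hA.card_pos
  have hb1 : 1 ≤ bb := by rw [hbb]; exact_mod_cast hB.card_pos
  have hpos : 0 < a * bb^2 + a^2 * bb := by nlinarith
  have hkey : lambda2 G * (a * bb^2 + a^2 * bb) ≤ s * (a * bb^2 + a^2 * bb) := by
    calc lambda2 G * (a * bb^2 + a^2 * bb) = lambda2 G * (x ⬝ᵥ x) := by rw [hdot]
    _ ≤ x ⬝ᵥ (G.lapMatrix ℝ *ᵥ x) := lambda2_mul_le G hconn x hsumx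
    _ ≤ s * (a * bb^2 + a^2 * bb) := hQ
  exact le_of_mul_le_mul_right hkey hpos


/-- For a connected finite graph that is not complete, the algebraic connectivity is at
most the vertex connectivity. -/
theorem lambda2_le_vertexConnectivity {V : Type*} [Fintype V] [DecidableEq V]
    (G : SimpleGraph V) [DecidableRel G.Adj] (hconn : G.Connected) (hnc : G ≠ ⊤) :
    lambda2 G ≤ (vConn G : ℝ) := by
  classical
  have hne : {k | ∃ S : Set V, S.ncard = k ∧
      (¬ (G.induce Sᶜ).Connected ∨ Sᶜ.ncard ≤ 1)}.Nonempty := by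
    refine ⟨Fintype.card V, Set.univ, ?_, Or.inr ?_⟩
    · rw [Set.ncard_univ, Nat.card_eq_fintype_card]
    · simp
  obtain ⟨S, hScard, hSprop⟩ : ∃ S : Set V, S.ncard = vConn G ∧
      (¬ (G.induce Sᶜ).Connected ∨ Sᶜ.ncard ≤ 1) := Nat.sInf_mem hne
  have hpair : ∃ u w : V, u ≠ w ∧ ¬ G.Adj u w := by
    by_contra hcon
    push_neg at hcon
    apply hnc
    ext u w
    simp only [SimpleGraph.top_adj]
    exact ⟨fun h => h.ne, fun h => hcon u w h⟩
  obtain ⟨u, w, huw, hnadj⟩ := hpair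
  have hdisj_uw : Disjoint ({u} : Finset V) {w} := Finset.disjoint_singleton.mpr huw
  have hdeg : lambda2 G ≤ ((Finset.univ \ ({u} ∪ {w} : Finset V)).card : ℝ) := by
    refine lambda2_le_card_compl G hconn {u} {w} ⟨u, Finset.mem_singleton_self u⟩
      ⟨w, Finset.mem_singleton_self w⟩ hdisj_uw ?_
    intro i hi j hj hadj
    rw [Finset.mem_singleton] at hi hj
    subst hi; subst hj
    exact hnadj hadj
  have hcard_pair : (Finset.univ \ ({u} ∪ {w} : Finset V)).card = Fintype.card V - 2 := by
    rw [Finset.card_sdiff_of_subset (Finset.subset_univ _), Finset.card_univ,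
      Finset.card_union_of_disjoint hdisj_uw]
    simp
  have hcompl : S.ncard + Sᶜ.ncard = Fintype.card V := by
    rw [Set.ncard_add_ncard_compl, Nat.card_eq_fintype_card]
  have hdegcase : Sᶜ.ncard ≤ 1 → lambda2 G ≤ (vConn G : ℝ) := by
    intro hsm
    have h2 : Fintype.card V - 2 ≤ vConn G := by omega
    calc lambda2 G ≤ ((Finset.univ \ ({u} ∪ {w} : Finset V)).card : ℝ) := hdeg
    _ = ((Fintype.card V - 2 : ℕ) : ℝ) := by rw [hcard_pair]
    _ ≤ (vConn G : ℝ) := Nat.cast_le.mpr h2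
  rcases hSprop with hdisc | hsmall
  swap
  · exact hdegcase hsmall
  by_cases hsc : Sᶜ.ncard ≤ 1
  · exact hdegcase hsc
  have hScne : (Sᶜ : Set V).Nonempty := Set.nonempty_of_ncard_ne_zero (by omega)
  have hprecon : ¬ (G.induce Sᶜ).Preconnected := by
    intro hp
    exact hdisc ((SimpleGraph.connected_iff _).mpr ⟨hp, hScne.to_subtype⟩)
  obtain ⟨va, vb, hnr⟩ : ∃ va vb : ↥(Sᶜ : Set V), ¬ (G.induce Sᶜ).Reachable va vb := by
    by_contra hcon
    push_neg at hcon
    exact hprecon hcon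
  set A : Finset V := Finset.univ.filter
    (fun v => ∃ hv : v ∈ (Sᶜ : Set V), (G.induce Sᶜ).Reachable va ⟨v, hv⟩) with hAdef
  set Bf : Finset V := Finset.univ.filter (fun v => v ∈ (Sᶜ : Set V) ∧ v ∉ A) with hBdef
  have hAmem : (va : V) ∈ A := by
    rw [hAdef, Finset.mem_filter]
    exact ⟨Finset.mem_univ _, va.2, SimpleGraph.Reachable.refl _⟩
  have hBmem : (vb : V) ∈ Bf := by
    rw [hBdef, Finset.mem_filter]
    refine ⟨Finset.mem_univ _, vb.2, ?_⟩
    intro hvb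
    rw [hAdef, Finset.mem_filter] at hvb
    obtain ⟨-, hv, hr⟩ := hvb
    exact hnr hr
  have hdisjAB : Disjoint A Bf := by
    rw [Finset.disjoint_left]
    intro v hvA hvB
    rw [hBdef, Finset.mem_filter] at hvB
    exact hvB.2.2 hvA
  have hedgeAB : ∀ i ∈ A, ∀ j ∈ Bf, ¬ G.Adj i j := by
    intro i hi j hj hadj
    rw [hAdef, Finset.mem_filter] at hi
    rw [hBdef, Finset.mem_filter] at hj
    obtain ⟨-, hi1, hi2⟩ := hi
    obtain ⟨-, hj1, hj2⟩ := hj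
    apply hj2
    rw [hAdef, Finset.mem_filter]
    refine ⟨Finset.mem_univ _, hj1, ?_⟩
    refine hi2.trans (SimpleGraph.Adj.reachable ?_)
    show (G.induce Sᶜ).Adj ⟨i, hi1⟩ ⟨j, hj1⟩
    simpa using hadj
  have hcardeq : (Finset.univ \ (A ∪ Bf)) = S.toFinset := by
    ext v
    simp only [Finset.mem_sdiff, Finset.mem_univ, true_and, Finset.mem_union,
      Set.mem_toFinset]
    constructor
    · intro hv
      push_neg at hv
      by_contra hvS
      have hvc : v ∈ (Sᶜ : Set V) := hvS
      by_cases hvA : v ∈ A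
      · exact hv.1 hvA
      · apply hv.2
        rw [hBdef, Finset.mem_filter]
        exact ⟨Finset.mem_univ _, hvc, hvA⟩
    · intro hvS
      have hvnc : v ∉ (Sᶜ : Set V) := fun hc => hc hvS
      rw [not_or]
      constructor
      · intro hvA
        rw [hAdef, Finset.mem_filter] at hvA
        exact hvnc hvA.2.1
      · intro hvB
        rw [hBdef, Finset.mem_filter] at hvB
        exact hvnc hvB.2.1
  have hfinal := lambda2_le_card_compl G hconn A Bf ⟨va.1, hAmem⟩ ⟨vb.1, hBmem⟩ hdisjAB hedgeAB
  rw [hcardeq] at hfinal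
  calc lambda2 G ≤ (S.toFinset.card : ℝ) := hfinal
  _ = (vConn G : ℝ) := by rw [← Set.ncard_eq_toFinset_card' S, hScard]
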